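/- Let I ⊂ S be a graded ideal and let ≺ be a graded monomial order. Then the minimum distance function δ_I is independent of ≺; more precisely, for every d ≥ 1, if the set F_d of all homogeneous zero-divisors of S/I of degree d not lying in I is nonempty, then δ_I(d) = deg(S/I) − max{deg(S/(I, f)) : f ∈ F_d}, and if F_d is empty then F_{≺,d} is empty so δ_I(d) = deg(S/I). -/

import Mathlib

open MvPolynomial Finsupp Filter

namespace MDF

open scoped Classical

variable (K : Type*) [Field K] (s : ℕ)

/-- The Hilbert function of `S/I` in degree `d`: `dim_K (S_d / I_d)`. -/
noncomputable def hilbertFn (I : Ideal (MvPolynomial (Fin s) K)) (d : ℕ) : ℕ :=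
  Module.finrank K
    ((homogeneousSubmodule (Fin s) K d) ⧸
      (Submodule.comap (homogeneousSubmodule (Fin s) K d).subtype (I.restrictScalars K)))

/-- The Krull dimension of `S/I`, as a natural number. -/
noncomputable def krullDimQ (I : Ideal (MvPolynomial (Fin s) K)) : ℕ :=
  ((WithBot.unbotD 0 (ringKrullDim (MvPolynomial (Fin s) K ⧸ I))).untopD 0)

/-- The degree (multiplicity) of `S/I`: if `k = dim (S/I) ≥ 1`, it is
`(k-1)! · lim_d H_I(d)/d^(k-1)`, and it is `dim_K (S/I)` if `k = 0`. -/
noncomputable def degQ (I : Ideal (MvPolynomial (Fin s) K)) : ℕ :=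
  if krullDimQ K s I = 0 then Module.finrank K (MvPolynomial (Fin s) K ⧸ I)
  else Classical.epsilon (fun D : ℕ =>
    Tendsto (fun d : ℕ => (hilbertFn K s I d : ℝ) / (d : ℝ) ^ (krullDimQ K s I - 1)) atTop
      (nhds ((D : ℝ) / (Nat.factorial (krullDimQ K s I - 1)))))

/-- The regularity of the Hilbert function of `S/I`: the least `r ≥ 0` from which the
Hilbert function agrees with a polynomial (necessarily the Hilbert polynomial). -/
noncomputable def regQ (I : Ideal (MvPolynomial (Fin s) K)) : ℕ :=
  sInf { r : ℕ | ∃ P : Polynomial ℚ, ∀ d : ℕ, r ≤ d → (hilbertFn K s I d : ℚ) = P.eval (d : ℚ) }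

/-- The height of an ideal: the infimum of the heights of the primes containing it. -/
noncomputable def heightQ (I : Ideal (MvPolynomial (Fin s) K)) : ℕ∞ :=
  ⨅ p ∈ { p : PrimeSpectrum (MvPolynomial (Fin s) K) | I ≤ p.asIdeal }, Order.height p

/-- An ideal is a complete intersection if it can be generated by `ht(I)` elements. -/
def IsCompleteIntersection (I : Ideal (MvPolynomial (Fin s) K)) : Prop :=
  ∃ (n : ℕ) (f : Fin n → MvPolynomial (Fin s) K),
    (n : ℕ∞) = heightQ K s I ∧ I = Ideal.span (Set.range f)

/-- An ideal is unmixed if all its associated primes have the same height. -/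
def IsUnmixed (I : Ideal (MvPolynomial (Fin s) K)) : Prop :=
  ∀ p ∈ associatedPrimes (MvPolynomial (Fin s) K) (MvPolynomial (Fin s) K ⧸ I),
    ∀ q ∈ associatedPrimes (MvPolynomial (Fin s) K) (MvPolynomial (Fin s) K ⧸ I),
      heightQ K s p = heightQ K s q

/-- A graded (homogeneous) ideal: it contains all homogeneous components of its elements. -/
def IsGradedIdeal (I : Ideal (MvPolynomial (Fin s) K)) : Prop :=
  ∀ f ∈ I, ∀ n : ℕ, homogeneousComponent n f ∈ I

variable {K s} in
/-- A graded monomial order: one refining the total degree. -/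
def IsGradedOrder (m : MonomialOrder (Fin s)) : Prop :=
  ∀ a b : Fin s →₀ ℕ, a.degree < b.degree → m.toSyn a < m.toSyn b

variable {s} in
/-- The leading exponent (exponent of the leading monomial) of a polynomial with respect
to a monomial order.  (It is `0` by convention for the zero polynomial.) -/
noncomputable def lExp (m : MonomialOrder (Fin s)) (f : MvPolynomial (Fin s) K) :
    Fin s →₀ ℕ :=
  m.toSyn.symm (f.support.sup (fun a => m.toSyn a))

variable {s} in
/-- The initial ideal of `I`: the ideal generated by the leading monomials of the nonzero
elements of `I`. -/
noncomputable def initIdeal (m : MonomialOrder (Fin s)) (I : Ideal (MvPolynomial (Fin s) K)) :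
    Ideal (MvPolynomial (Fin s) K) :=
  Ideal.span { g | ∃ f ∈ I, f ≠ 0 ∧ g = monomial (lExp K m f) (1 : K) }

variable {s} in
/-- `f` is (or represents) a zero divisor of `S/I`. -/
def IsZeroDivOn (I : Ideal (MvPolynomial (Fin s) K)) (f : MvPolynomial (Fin s) K) : Prop :=
  ∃ g, g ∉ I ∧ f * g ∈ I

variable {s} in
/-- The set `M_{≺,d}` of exponents of the standard monomials of degree `d` that are
zero divisors of `S/in_≺(I)`. -/
noncomputable def Mset (m : MonomialOrder (Fin s)) (I : Ideal (MvPolynomial (Fin s) K))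
    (d : ℕ) : Set (Fin s →₀ ℕ) :=
  { a | a.degree = d ∧ monomial a (1 : K) ∉ initIdeal K m I ∧
      IsZeroDivOn K (initIdeal K m I) (monomial a (1 : K)) }

variable {s} in
/-- The set `F_{≺,d}` of nonzero zero divisors of `S/I` which are `K`-linear combinations
of standard monomials of degree `d`. -/
noncomputable def Fset (m : MonomialOrder (Fin s)) (I : Ideal (MvPolynomial (Fin s) K))
    (d : ℕ) : Set (MvPolynomial (Fin s) K) :=
  { f | f ≠ 0 ∧ (∀ a ∈ f.support, a.degree = d ∧ monomial a (1 : K) ∉ initIdeal K m I) ∧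
      IsZeroDivOn K I f }

variable {s} in
/-- The footprint function `fp_I`. -/
noncomputable def fp (m : MonomialOrder (Fin s)) (I : Ideal (MvPolynomial (Fin s) K))
    (d : ℕ) : ℤ :=
  if (Mset K m I d).Nonempty then
    (degQ K s I : ℤ) -
      sSup ((fun a => (degQ K s (initIdeal K m I ⊔ Ideal.span {monomial a (1 : K)}) : ℤ)) ''
        Mset K m I d)
  else (degQ K s I : ℤ)

variable {s} in
/-- The minimum distance function `δ_I`. -/
noncomputable def delta (m : MonomialOrder (Fin s)) (I : Ideal (MvPolynomial (Fin s) K))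
    (d : ℕ) : ℤ :=
  if (Fset K m I d).Nonempty then
    (degQ K s I : ℤ) -
      sSup ((fun f => (degQ K s (I ⊔ Ideal.span {f}) : ℤ)) '' Fset K m I d)
  else (degQ K s I : ℤ)

variable {s} in
/-- The vanishing ideal of a set of points of projective space: the ideal generated by
the homogeneous polynomials vanishing at (representatives of) all points of `X`. -/
noncomputable def vanishingIdeal (X : Set (Projectivization K (Fin s → K))) :
    Ideal (MvPolynomial (Fin s) K) :=
  Ideal.span { f | (∃ n, f.IsHomogeneous n) ∧ ∀ p ∈ X, eval p.rep f = 0 }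

variable {s} in
/-- The set of zeros in `X` of a (homogeneous) polynomial `f`. -/
def VX (X : Set (Projectivization K (Fin s → K))) (f : MvPolynomial (Fin s) K) :
    Set (Projectivization K (Fin s → K)) :=
  { p ∈ X | eval p.rep f = 0 }


section Aux

variable {K : Type*} [Field K] {s : ℕ} (m : MonomialOrder (Fin s))

lemma toSyn_lExp (f : MvPolynomial (Fin s) K) :
    m.toSyn (lExp K m f) = f.support.sup (fun a => m.toSyn a) := by
  simp [lExp]

lemma lExp_mem_support {f : MvPolynomial (Fin s) K} (hf : f ≠ 0) :
    lExp K m f ∈ f.support := by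
  have hne : f.support.Nonempty := MvPolynomial.support_nonempty.mpr hf
  obtain ⟨b, hb, hbeq⟩ := Finset.exists_mem_eq_sup f.support hne (fun a => m.toSyn a)
  have : lExp K m f = b := by
    rw [lExp, hbeq]; exact m.toSyn.symm_apply_apply b
  rwa [this]

lemma le_toSyn_lExp {f : MvPolynomial (Fin s) K} {a : Fin s →₀ ℕ} (ha : a ∈ f.support) :
    m.toSyn a ≤ m.toSyn (lExp K m f) := by
  rw [toSyn_lExp]; exact Finset.le_sup ha

lemma coeff_eq_zero_of_lExp_lt {f : MvPolynomial (Fin s) K} {b : Fin s →₀ ℕ}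
    (h : m.toSyn (lExp K m f) < m.toSyn b) : MvPolynomial.coeff b f = 0 := by
  by_contra hb
  exact absurd (le_toSyn_lExp m (MvPolynomial.mem_support_iff.mpr hb)) (not_le.mpr h)

lemma monomial_lExp_mem_initIdeal {I : Ideal (MvPolynomial (Fin s) K)}
    {f : MvPolynomial (Fin s) K} (hfI : f ∈ I) (hf : f ≠ 0) :
    (monomial (lExp K m f) (1 : K)) ∈ initIdeal K m I :=
  Ideal.subset_span ⟨f, hfI, hf, rfl⟩

lemma not_mem_of_standard {I : Ideal (MvPolynomial (Fin s) K)}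
    {r : MvPolynomial (Fin s) K} (hr : r ≠ 0)
    (hst : ∀ a ∈ r.support, monomial a (1 : K) ∉ initIdeal K m I) : r ∉ I := by
  intro hrI
  exact hst _ (lExp_mem_support m hr) (monomial_lExp_mem_initIdeal m hrI hr)

lemma monomial_mem_initIdeal_iff {I : Ideal (MvPolynomial (Fin s) K)} {a : Fin s →₀ ℕ} :
    (monomial a (1 : K)) ∈ initIdeal K m I ↔
      ∃ g ∈ I, g ≠ 0 ∧ lExp K m g ≤ a := by
  have hset : { g | ∃ f ∈ I, f ≠ 0 ∧ g = monomial (lExp K m f) (1 : K) } =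
      (fun s => monomial s (1 : K)) '' { b | ∃ f ∈ I, f ≠ 0 ∧ b = lExp K m f } := by
    ext g
    constructor
    · rintro ⟨f, hfI, hf0, rfl⟩; exact ⟨lExp K m f, ⟨f, hfI, hf0, rfl⟩, rfl⟩
    · rintro ⟨b, ⟨f, hfI, hf0, rfl⟩, rfl⟩; exact ⟨f, hfI, hf0, rfl⟩
  rw [initIdeal, hset, MvPolynomial.mem_ideal_span_monomial_image]
  have hsupp : (monomial a (1 : K)).support = {a} := by
    rw [MvPolynomial.support_monomial, if_neg (one_ne_zero)]
  rw [hsupp]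
  constructor
  · intro h
    obtain ⟨si, ⟨f, hfI, hf0, rfl⟩, hle⟩ := h a (Finset.mem_singleton_self a)
    exact ⟨f, hfI, hf0, hle⟩
  · rintro ⟨g, hgI, hg0, hle⟩ xi hxi
    rw [Finset.mem_singleton] at hxi
    exact ⟨lExp K m g, ⟨g, hgI, hg0, rfl⟩, hxi ▸ hle⟩

/-- Division with remainder: every polynomial has a normal form modulo `I` supported on
standard monomials. -/
lemma exists_normalForm (I : Ideal (MvPolynomial (Fin s) K)) (f : MvPolynomial (Fin s) K) :
    ∃ r : MvPolynomial (Fin s) K, f - r ∈ I ∧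
      ∀ a ∈ r.support, monomial a (1 : K) ∉ initIdeal K m I := by
  set degB : MvPolynomial (Fin s) K → WithBot m.syn :=
    fun f => f.support.sup (fun a => ((m.toSyn a : m.syn) : WithBot m.syn)) with hdegB
  suffices H : ∀ D : WithBot m.syn, ∀ f : MvPolynomial (Fin s) K, degB f = D →
      ∃ r : MvPolynomial (Fin s) K, f - r ∈ I ∧
        ∀ a ∈ r.support, monomial a (1 : K) ∉ initIdeal K m I by
    exact H _ f rfl
  intro D
  induction D using WellFoundedLT.induction with
  | _ D IH =>
    intro f hfD
    by_cases h0 : f = 0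
    · exact ⟨0, by simp [h0], by simp⟩
    set a := lExp K m f with ha
    have hasupp : a ∈ f.support := lExp_mem_support m h0
    have hDeq : D = ((m.toSyn a : m.syn) : WithBot m.syn) := by
      rw [← hfD, hdegB]
      apply le_antisymm
      · exact Finset.sup_le fun b hb => WithBot.coe_le_coe.mpr (le_toSyn_lExp m hb)
      · exact Finset.le_sup (f := fun b => ((m.toSyn b : m.syn) : WithBot m.syn)) hasupp
    -- key step lemma: any g with all nonzero coeffs strictly below `a` has smaller degB
    have hsmaller : ∀ g : MvPolynomial (Fin s) K,
        (∀ b, MvPolynomial.coeff b g ≠ 0 → m.toSyn b < m.toSyn a) → degB g < D := by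
      intro g hg
      rw [hDeq, hdegB]
      have hbot : (⊥ : WithBot m.syn) < ((m.toSyn a : m.syn) : WithBot m.syn) :=
        WithBot.bot_lt_coe _
      exact (Finset.sup_lt_iff hbot).mpr
        (fun b hb => WithBot.coe_lt_coe.mpr (hg b (MvPolynomial.mem_support_iff.mp hb)))
    by_cases hst : (monomial a (1 : K)) ∈ initIdeal K m I
    · -- leading monomial is in the initial ideal: cancel it with an element of I
      obtain ⟨g, hgI, hg0, hle⟩ := (monomial_mem_initIdeal_iff m).mp hst
      obtain ⟨c, hc⟩ : ∃ c, a = lExp K m g + c := le_iff_exists_add.mp hle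
      set cg := MvPolynomial.coeff (lExp K m g) g with hcg
      have hcg0 : cg ≠ 0 := MvPolynomial.mem_support_iff.mp (lExp_mem_support m hg0)
      set u := MvPolynomial.coeff a f / cg with hu
      set q := monomial c u * g with hq
      have hqI : q ∈ I := I.mul_mem_left _ hgI
      have hqbound : ∀ b, MvPolynomial.coeff b q ≠ 0 → m.toSyn b ≤ m.toSyn a := by
        intro b hb
        have hbsupp : b ∈ q.support := MvPolynomial.mem_support_iff.mpr hb
        have := MvPolynomial.support_mul (monomial c u) g hbsupp
        rw [Finset.mem_add] at this
        obtain ⟨c', hc', b', hb', rfl⟩ := this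
        have hc'eq : c' = c := by
          have := MvPolynomial.support_monomial (s := c) (a := u) ▸ hc'
          by_cases hu0 : u = 0
          · simp [hu0] at this
          · simpa [hu0] using this
        rw [hc'eq]
        have : m.toSyn b' ≤ m.toSyn (lExp K m g) := le_toSyn_lExp m hb'
        calc m.toSyn (c + b') = m.toSyn c + m.toSyn b' := by rw [map_add]
          _ ≤ m.toSyn c + m.toSyn (lExp K m g) := by exact add_le_add (le_refl _) this
          _ = m.toSyn (c + lExp K m g) := by rw [map_add]
          _ = m.toSyn a := by rw [hc, add_comm]
      have hcoeffa : MvPolynomial.coeff a q = MvPolynomial.coeff a f := by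
        have h1 : MvPolynomial.coeff a q = u * cg := by
          rw [hq, show a = c + lExp K m g from by rw [hc, add_comm]]
          exact MvPolynomial.coeff_monomial_mul _ _ _ _
        rw [h1, hu, div_mul_cancel₀ _ hcg0]
      have hbound : ∀ b, MvPolynomial.coeff b (f - q) ≠ 0 → m.toSyn b < m.toSyn a := by
        intro b hb
        by_contra hcon
        push_neg at hcon
        rcases eq_or_lt_of_le hcon with heq | hlt
        · have hba : b = a := m.toSyn.injective heq.symm
          rw [hba, MvPolynomial.coeff_sub, hcoeffa, sub_self] at hb
          exact hb rfl
        · have h1 : MvPolynomial.coeff b f = 0 := coeff_eq_zero_of_lExp_lt m (ha ▸ hlt)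
          have h2 : MvPolynomial.coeff b q = 0 := by
            by_contra h2
            exact absurd (hqbound b h2) (not_le.mpr hlt)
          rw [MvPolynomial.coeff_sub, h1, h2, sub_self] at hb
          exact hb rfl
      obtain ⟨r, hr1, hr2⟩ := IH (degB (f - q)) (hsmaller _ hbound) (f - q) rfl
      refine ⟨r, ?_, hr2⟩
      have : f - r = (f - q - r) + q := by ring
      rw [this]
      exact I.add_mem hr1 hqI
    · -- leading monomial is standard: move it to the remainder
      set f' := f - monomial a (MvPolynomial.coeff a f) with hf'
      have hbound : ∀ b, MvPolynomial.coeff b f' ≠ 0 → m.toSyn b < m.toSyn a := by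
        intro b hb
        by_contra hcon
        push_neg at hcon
        rcases eq_or_lt_of_le hcon with heq | hlt
        · have hba : b = a := m.toSyn.injective heq.symm
          rw [hf', MvPolynomial.coeff_sub, hba, MvPolynomial.coeff_monomial,
            if_pos rfl, sub_self] at hb
          exact hb rfl
        · have h1 : MvPolynomial.coeff b f = 0 := coeff_eq_zero_of_lExp_lt m (ha ▸ hlt)
          have h2 : MvPolynomial.coeff b (monomial a (MvPolynomial.coeff a f)) = 0 := by
            rw [MvPolynomial.coeff_monomial, if_neg]
            intro h; exact absurd (h ▸ hlt) (lt_irrefl _)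
          rw [hf', MvPolynomial.coeff_sub, h1, h2, sub_self] at hb
          exact hb rfl
      obtain ⟨r', hr1, hr2⟩ := IH (degB f') (hsmaller _ hbound) f' rfl
      refine ⟨r' + monomial a (MvPolynomial.coeff a f), ?_, ?_⟩
      · have : f - (r' + monomial a (MvPolynomial.coeff a f)) = f' - r' := by
          rw [hf']; ring
        rw [this]; exact hr1
      · intro b hb
        have := MvPolynomial.support_add hb
        rw [Finset.mem_union] at this
        rcases this with h | h
        · exact hr2 b h
        · have hba : b = a := by
            have := MvPolynomial.support_monomial
              (s := a) (a := MvPolynomial.coeff a f) ▸ h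
            by_cases hc0 : MvPolynomial.coeff a f = 0
            · simp [hc0] at this
            · simpa [hc0] using this
          rw [hba]; exact hst

/-- Homogeneous normal form for graded ideals. -/
lemma exists_normalForm_homog {I : Ideal (MvPolynomial (Fin s) K)}
    (hI : IsGradedIdeal K s I) {f : MvPolynomial (Fin s) K} {d : ℕ}
    (hf : f.IsHomogeneous d) :
    ∃ r : MvPolynomial (Fin s) K, f - r ∈ I ∧
      ∀ a ∈ r.support, a.degree = d ∧ monomial a (1 : K) ∉ initIdeal K m I := by
  obtain ⟨r₀, hr₀I, hr₀st⟩ := exists_normalForm m I f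
  refine ⟨homogeneousComponent d r₀, ?_, ?_⟩
  · have h1 : homogeneousComponent d (f - r₀) ∈ I := hI _ hr₀I d
    have h2 : homogeneousComponent d (f - r₀) = f - homogeneousComponent d r₀ := by
      rw [map_sub]
      congr 1
      rw [homogeneousComponent_of_mem ((mem_homogeneousSubmodule _ _).mpr hf), if_pos rfl]
    rwa [h2] at h1
  · intro a ha
    have hcoeff := MvPolynomial.mem_support_iff.mp ha
    rw [coeff_homogeneousComponent] at hcoeff
    by_cases hdeq : a.degree = d
    · refine ⟨hdeq, hr₀st a ?_⟩
      rw [if_pos hdeq] at hcoeff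
      exact MvPolynomial.mem_support_iff.mpr hcoeff
    · rw [if_neg hdeq] at hcoeff; exact absurd rfl hcoeff

lemma isZeroDivOn_congr {I : Ideal (MvPolynomial (Fin s) K)}
    {f r : MvPolynomial (Fin s) K} (h : f - r ∈ I) :
    IsZeroDivOn K I f ↔ IsZeroDivOn K I r := by
  constructor
  · rintro ⟨g, hg, hfg⟩
    refine ⟨g, hg, ?_⟩
    have : r * g = f * g - (f - r) * g := by ring
    rw [this]
    exact I.sub_mem hfg (I.mul_mem_right g h)
  · rintro ⟨g, hg, hrg⟩
    refine ⟨g, hg, ?_⟩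
    have : f * g = r * g + (f - r) * g := by ring
    rw [this]
    exact I.add_mem hrg (I.mul_mem_right g h)

lemma sup_span_congr {I : Ideal (MvPolynomial (Fin s) K)}
    {f r : MvPolynomial (Fin s) K} (h : f - r ∈ I) :
    I ⊔ Ideal.span {f} = I ⊔ Ideal.span {r} := by
  apply le_antisymm
  · refine sup_le le_sup_left ?_
    rw [Ideal.span_le, Set.singleton_subset_iff]
    have : f = (f - r) + r := by ring
    rw [this]
    exact Ideal.add_mem _ (Ideal.mem_sup_left h)
      (Ideal.mem_sup_right (Ideal.subset_span rfl))
  · refine sup_le le_sup_left ?_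
    rw [Ideal.span_le, Set.singleton_subset_iff]
    have : r = -(f - r) + f := by ring
    rw [this]
    exact Ideal.add_mem _ (Ideal.mem_sup_left (I.neg_mem h))
      (Ideal.mem_sup_right (Ideal.subset_span rfl))

end Aux


/-- The minimum distance function `δ_I` does not depend on the monomial
order: it can be computed from the set `F_d` of all homogeneous zero divisors of `S/I` of
degree `d` not lying in `I`. -/
theorem delta_indep_of_order
    {K : Type*} [Field K] {s : ℕ} (hs : 2 ≤ s)
    (m : MonomialOrder (Fin s)) (hm : IsGradedOrder m)
    (I : Ideal (MvPolynomial (Fin s) K)) (hI : IsGradedIdeal K s I)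
    (d : ℕ) (hd : 1 ≤ d) :
    (({ f : MvPolynomial (Fin s) K |
          f.IsHomogeneous d ∧ f ∉ I ∧ IsZeroDivOn K I f }).Nonempty →
      delta K m I d = (degQ K s I : ℤ) -
        sSup ((fun f => (degQ K s (I ⊔ Ideal.span {f}) : ℤ)) ''
          { f : MvPolynomial (Fin s) K |
              f.IsHomogeneous d ∧ f ∉ I ∧ IsZeroDivOn K I f })) ∧
    ({ f : MvPolynomial (Fin s) K |
          f.IsHomogeneous d ∧ f ∉ I ∧ IsZeroDivOn K I f } = ∅ →
      Fset K m I d = ∅ ∧ delta K m I d = (degQ K s I : ℤ)) := by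
  set F := { f : MvPolynomial (Fin s) K |
      f.IsHomogeneous d ∧ f ∉ I ∧ IsZeroDivOn K I f } with hF
  have claim1 : Fset K m I d ⊆ F := by
    rintro f ⟨hf0, hsupp, hzd⟩
    refine ⟨?_, ?_, hzd⟩
    · intro b hb
      rw [show (weight 1 : (Fin s →₀ ℕ) →+ ℕ) = weight (fun _ => 1) from rfl,
        ← Finsupp.degree_eq_weight_one]
      exact (hsupp b (MvPolynomial.mem_support_iff.mpr hb)).1
    · exact not_mem_of_standard m hf0 (fun a ha => (hsupp a ha).2)
  have claim2 : ∀ f ∈ F, ∃ r ∈ Fset K m I d,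
      I ⊔ Ideal.span {f} = I ⊔ Ideal.span {r} := by
    rintro f ⟨hfh, hfI, hzd⟩
    obtain ⟨r, hrI, hrsupp⟩ := exists_normalForm_homog m hI hfh
    have hr0 : r ≠ 0 := by
      rintro rfl
      rw [sub_zero] at hrI
      exact hfI hrI
    exact ⟨r, ⟨hr0, hrsupp, (isZeroDivOn_congr hrI).mp hzd⟩, sup_span_congr hrI⟩
  have himg : (fun f => (degQ K s (I ⊔ Ideal.span {f}) : ℤ)) '' Fset K m I d =
      (fun f => (degQ K s (I ⊔ Ideal.span {f}) : ℤ)) '' F := by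
    apply Set.Subset.antisymm
    · exact Set.image_mono claim1
    · rintro y ⟨f, hf, rfl⟩
      obtain ⟨r, hr, heq⟩ := claim2 f hf
      refine ⟨r, hr, ?_⟩
      show (degQ K s (I ⊔ Ideal.span {r}) : ℤ) = (degQ K s (I ⊔ Ideal.span {f}) : ℤ)
      rw [heq]
  constructor
  · intro hne
    obtain ⟨f, hf⟩ := hne
    obtain ⟨r, hr, -⟩ := claim2 f hf
    have hFne : (Fset K m I d).Nonempty := ⟨r, hr⟩
    rw [delta, if_pos hFne, himg]
  · intro hemp
    have hFe : Fset K m I d = ∅ := by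
      apply Set.eq_empty_of_subset_empty
      rw [← hemp]
      exact claim1
    refine ⟨hFe, ?_⟩
    rw [delta, if_neg (by rw [hFe]; exact Set.not_nonempty_empty)]


end MDF
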